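/- Assume inf_{x,y∈S} κ(x,y) > 0, sup_{x,y∈S} κ(x,y) < ∞, ∫_S e^{a ψ(x)} dμ(x) < ∞ for some a > 0 where ψ(x) = (∫_S κ(x,y)² dμ(y))^{1/2}, and ‖T_κ‖ < 1. Then there exist z > 1 and a μ-a.e. finite measurable function f ≥ 1 satisfying f = z·e^{T_κ[f−1]} μ-a.e. -/

import Mathlib

open MeasureTheory Filter
open scoped ENNReal

/-- Extended exponential on `ℝ≥0∞`, with `eexp ⊤ = ⊤`. -/
noncomputable def eexp (t : ℝ≥0∞) : ℝ≥0∞ :=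
  if t = ⊤ then ⊤ else ENNReal.ofReal (Real.exp t.toReal)

/-- The nonlinear operator `Φ_{z,κ}[f](x) = z·exp(T_κ[f-1](x))`. -/
noncomputable def Phi {S : Type*} [MeasurableSpace S] (μ : Measure S)
    (κ : S → S → ℝ) (z : ℝ) (f : S → ℝ≥0∞) : S → ℝ≥0∞ :=
  fun x => ENNReal.ofReal z * eexp (∫⁻ y, ENNReal.ofReal (κ x y) * (f y - 1) ∂μ)

/-- The `L²(μ)` operator norm of the integral operator `T_κ`, as a supremum over
nonnegative functions of `L²`-norm at most one. -/
noncomputable def opNorm {S : Type*} [MeasurableSpace S] (μ : Measure S)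
    (κ : S → S → ℝ) : ℝ≥0∞ :=
  ⨆ (f : S → ℝ≥0∞) (_ : Measurable f) (_ : (∫⁻ x, f x ^ 2 ∂μ) ^ ((1 : ℝ) / 2) ≤ 1),
    (∫⁻ x, (∫⁻ y, ENNReal.ofReal (κ x y) * f y ∂μ) ^ 2 ∂μ) ^ ((1 : ℝ) / 2)

set_option linter.unusedSectionVars false
set_option linter.unusedVariables false

lemma eexp_ne_top {t : ℝ≥0∞} (ht : t ≠ ⊤) : eexp t = ENNReal.ofReal (Real.exp t.toReal) := by
  simp [eexp, ht]

lemma eexp_mono : Monotone eexp := by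
  intro s t hst
  rcases eq_or_ne t ⊤ with rfl | ht
  · simp [eexp]
  · have hs : s ≠ ⊤ := fun h => ht (top_le_iff.mp (h ▸ hst))
    rw [eexp_ne_top hs, eexp_ne_top ht]
    exact ENNReal.ofReal_le_ofReal (Real.exp_le_exp.mpr (ENNReal.toReal_mono ht hst))

lemma measurable_eexp : Measurable eexp := by
  unfold eexp
  apply Measurable.ite (MeasurableSet.singleton ⊤ : MeasurableSet {x : ℝ≥0∞ | x = ⊤}) measurable_const
  exact ENNReal.measurable_ofReal.comp (Real.continuous_exp.measurable.comp ENNReal.measurable_toReal)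

lemma one_le_eexp (t : ℝ≥0∞) : 1 ≤ eexp t := by
  rcases eq_or_ne t ⊤ with rfl | ht
  · simp [eexp]
  · rw [eexp_ne_top ht]
    rw [show (1:ℝ≥0∞) = ENNReal.ofReal 1 by simp]
    exact ENNReal.ofReal_le_ofReal (Real.one_le_exp ENNReal.toReal_nonneg)

lemma eexp_iSup_of_ne_top {t : ℕ → ℝ≥0∞} (hmono : Monotone t) (h : (⨆ n, t n) ≠ ⊤) :
    eexp (⨆ n, t n) = ⨆ n, eexp (t n) := by
  have h1 : Tendsto t atTop (nhds (⨆ n, t n)) := tendsto_atTop_iSup hmono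
  have h2 : Tendsto (fun n => eexp (t n)) atTop (nhds (eexp (⨆ n, t n))) := by
    have htn : ∀ n, t n ≠ ⊤ := fun n => ne_top_of_le_ne_top h (le_iSup t n)
    have h3 : Tendsto (fun n => (t n).toReal) atTop (nhds (⨆ n, t n).toReal) :=
      (ENNReal.tendsto_toReal h).comp h1
    have h4 : Tendsto (fun n => ENNReal.ofReal (Real.exp (t n).toReal)) atTop
        (nhds (ENNReal.ofReal (Real.exp (⨆ n, t n).toReal))) :=
      (ENNReal.continuous_ofReal.tendsto _).comp ((Real.continuous_exp.tendsto _).comp h3)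
    rw [eexp_ne_top h]
    refine h4.congr fun n => ?_
    rw [eexp_ne_top (htn n)]
  exact tendsto_nhds_unique h2 (tendsto_atTop_iSup (fun m n hmn => eexp_mono (hmono hmn)))

lemma eexp_ofReal {s : ℝ} (hs : 0 ≤ s) : eexp (ENNReal.ofReal s) = ENNReal.ofReal (Real.exp s) := by
  rw [eexp_ne_top ENNReal.ofReal_ne_top, ENNReal.toReal_ofReal hs]

lemma real_key_ineq {z s m : ℝ} (hz : 1 ≤ z) (hs : 0 ≤ s) (hsm : s ≤ m) :
    z * Real.exp s - 1 ≤ (z - 1) * Real.exp m + Real.exp m * s := by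
  have h1 : Real.exp s ≤ Real.exp m := Real.exp_le_exp.mpr hsm
  have h2 : Real.exp s - 1 ≤ s * Real.exp s := by
    have h3 := Real.add_one_le_exp (-s)
    have h4 := Real.exp_pos s
    have h5 : Real.exp (-s) * Real.exp s = 1 := by
      rw [← Real.exp_add]; simp
    nlinarith
  have h6 := Real.exp_pos s
  nlinarith

lemma lintegral_le_L2 {S : Type*} [MeasurableSpace S] (μ : Measure S) [IsProbabilityMeasure μ]
    {g : S → ℝ≥0∞} (hg : Measurable g) :
    ∫⁻ x, g x ∂μ ≤ (∫⁻ x, g x ^ 2 ∂μ) ^ ((1:ℝ)/2) := by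
  have hpq : Real.HolderConjugate 2 2 := Real.holderConjugate_iff.mpr ⟨by norm_num, by norm_num⟩
  have := ENNReal.lintegral_mul_le_Lp_mul_Lq μ hpq hg.aemeasurable
    (aemeasurable_const (b := (1:ℝ≥0∞)))
  simp only [Pi.mul_apply, mul_one, ENNReal.one_rpow, lintegral_const,
    measure_univ, ENNReal.one_rpow] at this
  calc ∫⁻ x, g x ∂μ ≤ (∫⁻ x, g x ^ (2:ℝ) ∂μ) ^ ((1:ℝ)/2) * 1 := by
        simpa using this
    _ = (∫⁻ x, g x ^ 2 ∂μ) ^ ((1:ℝ)/2) := by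
        rw [mul_one]
        congr 1
        refine lintegral_congr fun x => ?_
        rw [show (2:ℝ) = ((2:ℕ):ℝ) by norm_num, ENNReal.rpow_natCast]


lemma sq_rpow_half (k : ℝ≥0∞) : (k ^ 2) ^ ((1:ℝ)/2) = k := by
  rw [← ENNReal.rpow_natCast k 2, ← ENNReal.rpow_mul]
  norm_num

lemma L2_mul_const {S : Type*} [MeasurableSpace S] (μ : Measure S)
    {g : S → ℝ≥0∞} (hg : Measurable g) (k : ℝ≥0∞) :
    (∫⁻ x, (g x * k) ^ 2 ∂μ) ^ ((1:ℝ)/2) = (∫⁻ x, g x ^ 2 ∂μ) ^ ((1:ℝ)/2) * k := by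
  have : ∫⁻ x, (g x * k) ^ 2 ∂μ = (∫⁻ x, g x ^ 2 ∂μ) * k ^ 2 := by
    rw [← lintegral_mul_const _ (hg.pow_const 2)]
    exact lintegral_congr fun x => by ring
  rw [this, ENNReal.mul_rpow_of_nonneg _ _ (by norm_num), sq_rpow_half]

lemma opNorm_bound {S : Type*} [MeasurableSpace S] (μ : Measure S) [SFinite μ]
    (κ : S → S → ℝ) (hκmeas : Measurable (Function.uncurry κ))
    {g : S → ℝ≥0∞} (hg : Measurable g) {c : ℝ} (hc : 0 < c)
    (hgc : (∫⁻ x, g x ^ 2 ∂μ) ^ ((1:ℝ)/2) ≤ ENNReal.ofReal c) :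
    (∫⁻ x, (∫⁻ y, ENNReal.ofReal (κ x y) * g y ∂μ) ^ 2 ∂μ) ^ ((1:ℝ)/2)
      ≤ opNorm μ κ * ENNReal.ofReal c := by
  set C := ENNReal.ofReal c with hC
  have hC0 : C ≠ 0 := by simp [hC, ENNReal.ofReal_eq_zero]; linarith
  have hCt : C ≠ ⊤ := ENNReal.ofReal_ne_top
  set k := C⁻¹ with hk
  have hk0 : k ≠ 0 := by simp [hk, hCt]
  have hkt : k ≠ ⊤ := by simp [hk, hC0]
  set h := fun y => g y * k with hh
  have hhmeas : Measurable h := hg.mul_const k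
  have hcond : (∫⁻ x, h x ^ 2 ∂μ) ^ ((1 : ℝ) / 2) ≤ 1 := by
    rw [hh]
    calc (∫⁻ x, (g x * k) ^ 2 ∂μ) ^ ((1:ℝ)/2) = (∫⁻ x, g x ^ 2 ∂μ) ^ ((1:ℝ)/2) * k :=
          L2_mul_const μ hg k
      _ ≤ C * k := mul_le_mul_left hgc k
      _ = 1 := ENNReal.mul_inv_cancel hC0 hCt
  have hTh : ∀ x, (∫⁻ y, ENNReal.ofReal (κ x y) * h y ∂μ)
      = (∫⁻ y, ENNReal.ofReal (κ x y) * g y ∂μ) * k := by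
    intro x
    calc ∫⁻ y, ENNReal.ofReal (κ x y) * h y ∂μ
        = ∫⁻ y, (ENNReal.ofReal (κ x y) * g y) * k ∂μ :=
          lintegral_congr fun y => by rw [hh]; ring
      _ = (∫⁻ y, ENNReal.ofReal (κ x y) * g y ∂μ) * k :=
          lintegral_mul_const k ((ENNReal.measurable_ofReal.comp hκmeas.of_uncurry_left).mul hg)
  have hle : (∫⁻ x, (∫⁻ y, ENNReal.ofReal (κ x y) * h y ∂μ) ^ 2 ∂μ) ^ ((1:ℝ)/2) ≤ opNorm μ κ := by
    unfold opNorm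
    exact le_iSup_of_le h (le_iSup_of_le hhmeas (le_iSup_of_le hcond le_rfl))
  have hTg : Measurable fun x => ∫⁻ y, ENNReal.ofReal (κ x y) * g y ∂μ := by
    apply Measurable.lintegral_prod_right
    exact (ENNReal.measurable_ofReal.comp hκmeas).mul (hg.comp measurable_snd)
  have key : (∫⁻ x, (∫⁻ y, ENNReal.ofReal (κ x y) * g y ∂μ) ^ 2 ∂μ) ^ ((1:ℝ)/2) * k
      ≤ opNorm μ κ := by
    rw [← L2_mul_const μ hTg k]
    refine le_trans (le_of_eq ?_) hle
    congr 1
    exact lintegral_congr fun x => by rw [hTh x]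
  calc (∫⁻ x, (∫⁻ y, ENNReal.ofReal (κ x y) * g y ∂μ) ^ 2 ∂μ) ^ ((1:ℝ)/2)
      = (∫⁻ x, (∫⁻ y, ENNReal.ofReal (κ x y) * g y ∂μ) ^ 2 ∂μ) ^ ((1:ℝ)/2) * (k * C) := by
        rw [ENNReal.inv_mul_cancel hC0 hCt, mul_one]
    _ = (∫⁻ x, (∫⁻ y, ENNReal.ofReal (κ x y) * g y ∂μ) ^ 2 ∂μ) ^ ((1:ℝ)/2) * k * C := by ring
    _ ≤ opNorm μ κ * C := mul_le_mul_left key C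


set_option linter.unusedSectionVars false

section Main

variable {S : Type*} [MeasurableSpace S] (μ : Measure S) [IsProbabilityMeasure μ]
  (κ : S → S → ℝ)

/-- Measurability of T applied to (f - 1). -/
lemma T_meas (hκmeas : Measurable (Function.uncurry κ)) {f : S → ℝ≥0∞} (hf : Measurable f) :
    Measurable fun x => ∫⁻ y, ENNReal.ofReal (κ x y) * (f y - 1) ∂μ := by
  apply Measurable.lintegral_prod_right
  exact (ENNReal.measurable_ofReal.comp hκmeas).mul ((hf.comp measurable_snd).sub measurable_const)

lemma Phi_meas (hκmeas : Measurable (Function.uncurry κ)) (z : ℝ) {f : S → ℝ≥0∞}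
    (hf : Measurable f) : Measurable (Phi μ κ z f) :=
  measurable_const.mul (measurable_eexp.comp (T_meas μ κ hκmeas hf))

lemma Phi_mono (z : ℝ) {f f' : S → ℝ≥0∞} (h : ∀ y, f y ≤ f' y) (x : S) :
    Phi μ κ z f x ≤ Phi μ κ z f' x := by
  refine mul_le_mul_right (eexp_mono (lintegral_mono fun y => ?_)) _
  exact mul_le_mul_right (tsub_le_tsub_right (h y) 1) _


lemma tbound (hκmeas : Measurable (Function.uncurry κ)) {B c : ℝ}
    (hB : ∀ x y, κ x y ≤ B) (hBpos : 0 < B)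
    {f : S → ℝ≥0∞} (hf : Measurable f)
    (hL2 : (∫⁻ x, (f x - 1) ^ 2 ∂μ) ^ ((1:ℝ)/2) ≤ ENNReal.ofReal c) (x : S) :
    ∫⁻ y, ENNReal.ofReal (κ x y) * (f y - 1) ∂μ ≤ ENNReal.ofReal (B * c) := by
  calc ∫⁻ y, ENNReal.ofReal (κ x y) * (f y - 1) ∂μ
      ≤ ∫⁻ y, ENNReal.ofReal B * (f y - 1) ∂μ :=
        lintegral_mono fun y => mul_le_mul_left (ENNReal.ofReal_le_ofReal (hB x y)) _
    _ = ENNReal.ofReal B * ∫⁻ y, (f y - 1) ∂μ :=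
        lintegral_const_mul _ (hf.sub measurable_const)
    _ ≤ ENNReal.ofReal B * (∫⁻ x, (f x - 1) ^ 2 ∂μ) ^ ((1:ℝ)/2) :=
        mul_le_mul_right (lintegral_le_L2 μ (hf.sub measurable_const)) _
    _ ≤ ENNReal.ofReal B * ENNReal.ofReal c := mul_le_mul_right hL2 _
    _ = ENNReal.ofReal (B * c) := (ENNReal.ofReal_mul hBpos.le).symm

lemma Phi_pointwise {z B c : ℝ} (hz : 1 ≤ z) (hBc : 0 ≤ B * c) {f : S → ℝ≥0∞} (x : S)
    (ht : ∫⁻ y, ENNReal.ofReal (κ x y) * (f y - 1) ∂μ ≤ ENNReal.ofReal (B * c)) :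
    Phi μ κ z f x - 1 ≤ ENNReal.ofReal ((z - 1) * Real.exp (B * c))
      + ENNReal.ofReal (Real.exp (B * c)) * (∫⁻ y, ENNReal.ofReal (κ x y) * (f y - 1) ∂μ)
    ∧ Phi μ κ z f x ≤ ENNReal.ofReal (z * Real.exp (B * c))
    ∧ 1 ≤ Phi μ κ z f x := by
  set t := ∫⁻ y, ENNReal.ofReal (κ x y) * (f y - 1) ∂μ with hT
  have htne : t ≠ ⊤ := ne_top_of_le_ne_top ENNReal.ofReal_ne_top ht
  set s := t.toReal with hs
  have hs0 : 0 ≤ s := ENNReal.toReal_nonneg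
  have hsBc : s ≤ B * c := by
    have := ENNReal.toReal_mono ENNReal.ofReal_ne_top ht
    rwa [ENNReal.toReal_ofReal hBc] at this
  have hPhix : Phi μ κ z f x = ENNReal.ofReal (z * Real.exp s) := by
    show ENNReal.ofReal z * eexp t = _
    rw [eexp_ne_top htne, ← ENNReal.ofReal_mul (by linarith)]
  have hofs : ENNReal.ofReal s = t := ENNReal.ofReal_toReal htne
  refine ⟨?_, ?_, ?_⟩
  · rw [hPhix, show (1:ℝ≥0∞) = ENNReal.ofReal 1 by simp,
      ← ENNReal.ofReal_sub _ zero_le_one]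
    calc ENNReal.ofReal (z * Real.exp s - 1)
        ≤ ENNReal.ofReal ((z - 1) * Real.exp (B * c) + Real.exp (B * c) * s) :=
          ENNReal.ofReal_le_ofReal (real_key_ineq hz hs0 hsBc)
      _ = ENNReal.ofReal ((z - 1) * Real.exp (B * c))
          + ENNReal.ofReal (Real.exp (B * c) * s) := by
          rw [ENNReal.ofReal_add (mul_nonneg (by linarith) (Real.exp_pos _).le) (by positivity)]
      _ = ENNReal.ofReal ((z - 1) * Real.exp (B * c))
          + ENNReal.ofReal (Real.exp (B * c)) * t := by
          rw [ENNReal.ofReal_mul (Real.exp_pos _).le, hofs]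
  · rw [hPhix]
    refine ENNReal.ofReal_le_ofReal ?_
    have := Real.exp_le_exp.mpr hsBc
    nlinarith [Real.exp_pos s]
  · rw [hPhix, show (1:ℝ≥0∞) = ENNReal.ofReal 1 by simp]
    refine ENNReal.ofReal_le_ofReal ?_
    nlinarith [Real.one_le_exp hs0]


lemma L2_step (hκmeas : Measurable (Function.uncurry κ)) {z B c : ℝ}
    (hz : 1 ≤ z) (hBpos : 0 < B) (hc : 0 < c) (hB : ∀ x y, κ x y ≤ B)
    (hρt : opNorm μ κ ≠ ⊤)
    (hnum : (z - 1) * Real.exp (B * c)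
      + Real.exp (B * c) * ((opNorm μ κ).toReal * c) ≤ c)
    {f : S → ℝ≥0∞} (hf : Measurable f)
    (hL2 : (∫⁻ x, (f x - 1) ^ 2 ∂μ) ^ ((1:ℝ)/2) ≤ ENNReal.ofReal c) :
    (∫⁻ x, (Phi μ κ z f x - 1) ^ 2 ∂μ) ^ ((1:ℝ)/2) ≤ ENNReal.ofReal c := by
  set t := fun x => ∫⁻ y, ENNReal.ofReal (κ x y) * (f y - 1) ∂μ with hTdef
  have htmeas : Measurable t := T_meas μ κ hκmeas hf
  have htb : ∀ x, t x ≤ ENNReal.ofReal (B * c) := tbound μ κ hκmeas hB hBpos hf hL2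
  set K1 := ENNReal.ofReal ((z - 1) * Real.exp (B * c)) with hK1
  set K2 := ENNReal.ofReal (Real.exp (B * c)) with hK2
  have hpt : ∀ x, Phi μ κ z f x - 1 ≤ K1 + K2 * t x := fun x =>
    (Phi_pointwise μ κ hz (by positivity) x (htb x)).1
  have hmeasv : Measurable fun x => t x * K2 := htmeas.mul_const K2
  have step1 : (∫⁻ x, (Phi μ κ z f x - 1) ^ 2 ∂μ) ^ ((1:ℝ)/2)
      ≤ (∫⁻ x, (K1 + t x * K2) ^ 2 ∂μ) ^ ((1:ℝ)/2) := by
    refine ENNReal.rpow_le_rpow (lintegral_mono fun x => ?_) (by norm_num)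
    have := hpt x
    rw [mul_comm K2 (t x)] at this
    exact pow_le_pow_left' this 2
  have hconv : ∀ (w : S → ℝ≥0∞), ∫⁻ x, w x ^ (2:ℝ) ∂μ = ∫⁻ x, w x ^ 2 ∂μ := fun w =>
    lintegral_congr fun x => by
      rw [show (2:ℝ) = ((2:ℕ):ℝ) by norm_num, ENNReal.rpow_natCast]
  have step2 : (∫⁻ x, (K1 + t x * K2) ^ 2 ∂μ) ^ ((1:ℝ)/2)
      ≤ K1 + (∫⁻ x, (t x * K2) ^ 2 ∂μ) ^ ((1:ℝ)/2) := by
    have hmink := ENNReal.lintegral_Lp_add_le (μ := μ) (p := 2)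
      (aemeasurable_const (b := K1)) hmeasv.aemeasurable one_le_two
    simp only [Pi.add_apply] at hmink
    rw [hconv, hconv, hconv] at hmink
    calc (∫⁻ x, (K1 + t x * K2) ^ 2 ∂μ) ^ ((1:ℝ)/2)
        ≤ (∫⁻ _x, K1 ^ 2 ∂μ) ^ ((1:ℝ)/2) + (∫⁻ x, (t x * K2) ^ 2 ∂μ) ^ ((1:ℝ)/2) := hmink
      _ = K1 + (∫⁻ x, (t x * K2) ^ 2 ∂μ) ^ ((1:ℝ)/2) := by
          rw [lintegral_const, measure_univ, mul_one, sq_rpow_half]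
  have step3 : (∫⁻ x, (t x * K2) ^ 2 ∂μ) ^ ((1:ℝ)/2) ≤ opNorm μ κ * ENNReal.ofReal c * K2 := by
    rw [L2_mul_const μ htmeas K2]
    exact mul_le_mul_left
      (opNorm_bound μ κ hκmeas (hf.sub measurable_const) hc hL2) K2
  have final : K1 + opNorm μ κ * ENNReal.ofReal c * K2 ≤ ENNReal.ofReal c := by
    have hρ : opNorm μ κ = ENNReal.ofReal (opNorm μ κ).toReal := (ENNReal.ofReal_toReal hρt).symm
    set r := (opNorm μ κ).toReal with hr
    have hr0 : 0 ≤ r := ENNReal.toReal_nonneg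
    calc K1 + opNorm μ κ * ENNReal.ofReal c * K2
        = ENNReal.ofReal ((z - 1) * Real.exp (B * c)
            + Real.exp (B * c) * (r * c)) := by
          rw [hK1, hK2, hρ, ← ENNReal.ofReal_mul hr0,
            ← ENNReal.ofReal_mul (mul_nonneg hr0 hc.le),
            ← ENNReal.ofReal_add (mul_nonneg (by linarith) (Real.exp_pos _).le)
              (mul_nonneg (mul_nonneg hr0 hc.le) (Real.exp_pos _).le)]
          congr 1
          ring
      _ ≤ ENNReal.ofReal c := ENNReal.ofReal_le_ofReal hnum
  calc (∫⁻ x, (Phi μ κ z f x - 1) ^ 2 ∂μ) ^ ((1:ℝ)/2)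
      ≤ K1 + (∫⁻ x, (t x * K2) ^ 2 ∂μ) ^ ((1:ℝ)/2) := step1.trans step2
    _ ≤ K1 + opNorm μ κ * ENNReal.ofReal c * K2 := add_le_add_right step3 K1
    _ ≤ ENNReal.ofReal c := final

end Main



theorem stmt6 {S : Type*} [MeasurableSpace S] [MetricSpace S] [BorelSpace S]
    [TopologicalSpace.SeparableSpace S]
    (μ : Measure S) [IsProbabilityMeasure μ]
    (κ : S → S → ℝ) (hκmeas : Measurable (Function.uncurry κ))
    (hκsymm : ∀ x y, κ x y = κ y x)
    (hκinf : ∃ b : ℝ, 0 < b ∧ ∀ x y, b ≤ κ x y)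
    (hκsup : ∃ B : ℝ, ∀ x y, κ x y ≤ B)
    (hκ2 : ∀ x, Integrable (fun y => κ x y ^ 2) μ)
    (ψ : S → ℝ) (hψ : ∀ x, ψ x = Real.sqrt (∫ y, κ x y ^ 2 ∂μ))
    (a : ℝ) (ha : 0 < a)
    (hexp : Integrable (fun x => Real.exp (a * ψ x)) μ)
    (hnorm : opNorm μ κ < 1) :
    ∃ z : ℝ, 1 < z ∧ ∃ f : S → ℝ≥0∞, Measurable f ∧ (∀ x, 1 ≤ f x) ∧
      (∀ᵐ x ∂μ, f x ≠ ⊤) ∧ (∀ᵐ x ∂μ, Phi μ κ z f x = f x) := by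
  clear hκsymm hκ2 hψ hexp ha hκinf
  obtain ⟨B₀, hB₀⟩ := hκsup
  set B := max B₀ 1 with hBdef
  have hB : ∀ x y, κ x y ≤ B := fun x y => (hB₀ x y).trans (le_max_left _ _)
  have hBpos : (0:ℝ) < B := lt_of_lt_of_le one_pos (le_max_right _ _)
  have hρt : opNorm μ κ ≠ ⊤ := ne_top_of_lt hnorm
  set r := (opNorm μ κ).toReal with hrdef
  have hr0 : 0 ≤ r := ENNReal.toReal_nonneg
  have hr1 : r < 1 := by
    have := (ENNReal.toReal_lt_toReal hρt ENNReal.one_ne_top).mpr hnorm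
    simpa using this
  set s0 := max r (1/2 : ℝ) with hs0def
  have hs0 : (0:ℝ) < s0 := lt_of_lt_of_le one_half_pos (le_max_right _ _)
  have hs1 : s0 < 1 := max_lt hr1 (by norm_num)
  have hrs : r ≤ s0 := le_max_left _ _
  set q := Real.sqrt s0 with hqdef
  have hq0 : 0 < q := Real.sqrt_pos.mpr hs0
  have hq2 : q ^ 2 = s0 := Real.sq_sqrt hs0.le
  have hq1 : q < 1 := by nlinarith
  set c := Real.log (1/q) / B with hcdef
  have h1q : 1 < 1/q := by rw [lt_div_iff₀ hq0]; linarith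
  have hc : 0 < c := div_pos (Real.log_pos h1q) hBpos
  have hBc : B * c = Real.log (1/q) := by
    rw [hcdef]; field_simp
  have hBc0 : 0 ≤ B * c := mul_nonneg hBpos.le hc.le
  have hexpBc : Real.exp (B * c) = 1/q := by
    rw [hBc]; exact Real.exp_log (by positivity)
  set z := 1 + c * (1 - q) * q with hzdef
  have h1mq : 0 < 1 - q := by linarith
  have hz : 1 < z := by
    rw [hzdef]; nlinarith [mul_pos (mul_pos hc h1mq) hq0]
  have hnum : (z - 1) * Real.exp (B * c) + Real.exp (B * c) * (r * c) ≤ c := by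
    rw [hexpBc, show z - 1 = c * (1 - q) * q by rw [hzdef]; ring]
    have e1 : c * (1 - q) * q * (1/q) = c * (1 - q) := by field_simp
    have e2 : (1/q) * (r * c) ≤ q * c := by
      rw [div_mul_eq_mul_div, div_le_iff₀ hq0]
      nlinarith
    rw [e1]
    linarith
  -- the iteration
  set F : ℕ → S → ℝ≥0∞ :=
    fun n => Nat.rec (motive := fun _ => S → ℝ≥0∞) (fun _ => (1:ℝ≥0∞))
      (fun _ g => Phi μ κ z g) n with hFdef
  have hFs : ∀ n, F (n+1) = Phi μ κ z (F n) := fun n => rfl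
  have hInv : ∀ n, Measurable (F n) ∧ (∀ x, 1 ≤ F n x) ∧
      (∫⁻ x, (F n x - 1) ^ 2 ∂μ) ^ ((1:ℝ)/2) ≤ ENNReal.ofReal c := by
    intro n
    induction n with
    | zero =>
      refine ⟨measurable_const, fun x => le_refl 1, ?_⟩
      have h0 : (∫⁻ x, ((1:ℝ≥0∞) - 1) ^ 2 ∂μ) = 0 := by simp
      rw [show (∫⁻ x, (F 0 x - 1) ^ 2 ∂μ) = (∫⁻ x, ((1:ℝ≥0∞) - 1) ^ 2 ∂μ) from rfl, h0,
        ENNReal.zero_rpow_of_pos (by norm_num)]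
      exact zero_le
    | succ n ih =>
      obtain ⟨hm, h1, hL2⟩ := ih
      refine ⟨Phi_meas μ κ hκmeas z hm, fun x => ?_, ?_⟩
      · exact (Phi_pointwise μ κ hz.le hBc0 x (tbound μ κ hκmeas hB hBpos hm hL2 x)).2.2
      · exact L2_step μ κ hκmeas hz.le hBpos hc hB hρt (by rw [← hrdef]; linarith [hnum]) hm hL2
  have hstep : ∀ n, ∀ x, F n x ≤ F (n+1) x := by
    intro n
    induction n with
    | zero => exact fun x => (hInv 1).2.1 x
    | succ n ih => exact fun x => Phi_mono μ κ z ih x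
  have hmono : Monotone F := monotone_nat_of_le_succ fun n x => hstep n x
  set f : S → ℝ≥0∞ := fun x => ⨆ n, F n x with hfdef
  have hfmeas : Measurable f := Measurable.iSup fun n => (hInv n).1
  have hf1 : ∀ x, 1 ≤ f x := fun x => le_iSup (fun n => F n x) 0
  have hfub : ∀ x, f x ≤ ENNReal.ofReal (z * Real.exp (B * c)) := by
    intro x
    refine iSup_le fun n => ?_
    cases n with
    | zero =>
      show (1:ℝ≥0∞) ≤ _
      rw [show (1:ℝ≥0∞) = ENNReal.ofReal 1 by simp]
      exact ENNReal.ofReal_le_ofReal (by nlinarith [Real.one_le_exp hBc0])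
    | succ n =>
      exact (Phi_pointwise μ κ hz.le hBc0 x
        (tbound μ κ hκmeas hB hBpos (hInv n).1 (hInv n).2.2 x)).2.1
  have hfne : ∀ x, f x ≠ ⊤ := fun x => ne_top_of_le_ne_top ENNReal.ofReal_ne_top (hfub x)
  have hfix : ∀ x, Phi μ κ z f x = f x := by
    intro x
    have hintmeas : ∀ n, Measurable fun y => ENNReal.ofReal (κ x y) * (F n y - 1) := fun n =>
      (ENNReal.measurable_ofReal.comp hκmeas.of_uncurry_left).mul ((hInv n).1.sub measurable_const)
    have hintmono : Monotone fun n => fun y => ENNReal.ofReal (κ x y) * (F n y - 1) :=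
      fun m n hmn y => mul_le_mul_right (tsub_le_tsub_right (hmono hmn y) 1) _
    have hti : (∫⁻ y, ENNReal.ofReal (κ x y) * (f y - 1) ∂μ)
        = ⨆ n, ∫⁻ y, ENNReal.ofReal (κ x y) * (F n y - 1) ∂μ := by
      rw [← lintegral_iSup hintmeas hintmono]
      refine lintegral_congr fun y => ?_
      rw [hfdef]
      simp only [ENNReal.iSup_sub, ENNReal.mul_iSup]
    have htmono : Monotone fun n => ∫⁻ y, ENNReal.ofReal (κ x y) * (F n y - 1) ∂μ :=
      fun m n hmn => lintegral_mono (hintmono hmn)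
    have htne : (⨆ n, ∫⁻ y, ENNReal.ofReal (κ x y) * (F n y - 1) ∂μ) ≠ ⊤ :=
      ne_top_of_le_ne_top ENNReal.ofReal_ne_top
        (iSup_le fun n => tbound μ κ hκmeas hB hBpos (hInv n).1 (hInv n).2.2 x)
    show ENNReal.ofReal z * eexp (∫⁻ y, ENNReal.ofReal (κ x y) * (f y - 1) ∂μ) = f x
    rw [hti, eexp_iSup_of_ne_top htmono htne, ENNReal.mul_iSup]
    have hFn1 : ∀ n, ENNReal.ofReal z
        * eexp (∫⁻ y, ENNReal.ofReal (κ x y) * (F n y - 1) ∂μ) = F (n+1) x := fun n => rfl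
    apply le_antisymm
    · refine iSup_le fun n => ?_
      rw [hFn1 n]
      exact le_iSup (fun n => F n x) (n+1)
    · refine iSup_le fun n => ?_
      refine le_trans (hstep n x) ?_
      rw [← hFn1 n]
      exact le_iSup (fun n => ENNReal.ofReal z
        * eexp (∫⁻ y, ENNReal.ofReal (κ x y) * (F n y - 1) ∂μ)) n
  exact ⟨z, hz, f, hfmeas, hf1, ae_of_all μ hfne, ae_of_all μ hfix⟩
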